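/- Let n have l-bounded gaps and let B be a Schauder basis with basis constant K. If B is C_ql-n-quasi-greedy for largest coefficients, then B is M-quasi-greedy for largest coefficients (i.e. for all finite A), with M ≤ max{α₁α₂n₁, C_ql(K + l − 1)}. -/

import Mathlib

open Finset

private def thr (A : Finset ℕ) : ℕ → ℕ
  | 0 => 0
  | p+1 =>
    if h : (A.filter (fun x => thr A p ≤ x)).Nonempty
    then (A.filter (fun x => thr A p ≤ x)).min' h + 1
    else thr A p

private lemma thr_mono (A : Finset ℕ) : Monotone (thr A) := by
  apply monotone_nat_of_le_succ
  intro p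
  rw [thr]
  split_ifs with h
  · have hm := mem_filter.mp ((A.filter (fun x => thr A p ≤ x)).min'_mem h)
    exact Nat.le_succ_of_le hm.2
  · exact le_rfl

private lemma thr_card (A : Finset ℕ) : ∀ p, (A.filter (· < thr A p)).card = min p A.card := by
  intro p
  induction p with
  | zero =>
    have : A.filter (· < thr A 0) = ∅ := by
      apply Finset.filter_false_of_mem
      intro x _
      show ¬ x < thr A 0
      simp [thr]
    rw [this]
    simp
  | succ p ih =>
    by_cases h : (A.filter (fun x => thr A p ≤ x)).Nonempty
    · have hQ : thr A (p+1) = (A.filter (fun x => thr A p ≤ x)).min' h + 1 := by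
        rw [thr, dif_pos h]
      set m0 := (A.filter (fun x => thr A p ≤ x)).min' h with hm0def
      have hm0 : m0 ∈ A ∧ thr A p ≤ m0 :=
        mem_filter.mp ((A.filter (fun x => thr A p ≤ x)).min'_mem h)
      have hset : A.filter (· < thr A (p+1)) = insert m0 (A.filter (· < thr A p)) := by
        ext z
        simp only [hQ, mem_filter, mem_insert, Nat.lt_succ_iff]
        constructor
        · rintro ⟨hzA, hz⟩
          by_cases hlt : z < thr A p
          · exact Or.inr ⟨hzA, hlt⟩
          · left
            have hzR : z ∈ A.filter (fun x => thr A p ≤ x) :=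
              mem_filter.mpr ⟨hzA, not_lt.mp hlt⟩
            exact le_antisymm hz (Finset.min'_le _ z hzR)
        · rintro (rfl | ⟨hzA, hlt⟩)
          · exact ⟨hm0.1, le_rfl⟩
          · exact ⟨hzA, by omega⟩
      have hnot : m0 ∉ A.filter (· < thr A p) := by
        simp only [mem_filter, not_and, not_lt]
        intro _
        exact hm0.2
      rw [hset, card_insert_of_notMem hnot, ih]
      have hp : p < A.card := by
        by_contra hc
        push_neg at hc
        have hfull : A.filter (· < thr A p) = A :=
          eq_of_subset_of_card_le (filter_subset _ _) (by omega)
        obtain ⟨z, hz⟩ := h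
        have hz' := mem_filter.mp hz
        have hzf : z ∈ A.filter (· < thr A p) := by rw [hfull]; exact hz'.1
        have := (mem_filter.mp hzf).2
        omega
      omega
    · have hQ : thr A (p+1) = thr A p := by rw [thr, dif_neg h]
      have hfull : A.filter (· < thr A p) = A := by
        apply (filter_eq_self).mpr
        intro z hz
        by_contra hc
        exact h ⟨z, mem_filter.mpr ⟨hz, not_lt.mp hc⟩⟩
      rw [hQ, hfull]
      rw [hfull] at ih
      omega

/-- For a sequence with `l`-bounded gaps and a Schauder basis with constant
`K`, `Cql`-`n`-quasi-greediness for largest coefficients implies quasi-greediness for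
largest coefficients (all finite `A`) with constant at most `max (α₁α₂n₁) (Cql(K+l-1))`. -/
theorem stmt7
    {X : Type*} [NormedAddCommGroup X] [NormedSpace ℝ X]
    (e : ℕ → X) (f : ℕ → X →L[ℝ] ℝ)
    (hbi : ∀ i j, f i (e j) = if i = j then (1 : ℝ) else 0)
    (α₁ α₂ : ℝ) (hα₁pos : 0 < α₁) (hα₂pos : 0 < α₂)
    (hα₁ : ∀ i, ‖e i‖ ≤ α₁) (hα₂ : ∀ i, ‖f i‖ ≤ α₂)
    (K : ℝ) (hKpos : 0 < K)
    (hSch : ∀ (x : X) (m : ℕ), ‖∑ i ∈ Finset.range m, f i x • e i‖ ≤ K * ‖x‖)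
    (nseq : ℕ → ℕ) (hmono : StrictMono nseq) (hn1 : 0 < nseq 0)
    (l : ℕ) (hl : 2 ≤ l) (hgaps : ∀ k, nseq (k + 1) ≤ l * nseq k)
    (Cql : ℝ) (hCql : 0 < Cql)
    (hqglc : ∀ (A : Finset ℕ) (ε : ℕ → ℝ) (x : X),
      (∃ k, A.card = nseq k) → (∀ i ∈ A, |ε i| = 1) →
      (∀ i ∈ A, f i x = 0) → (∀ i, |f i x| ≤ 1) →
      ‖∑ i ∈ A, ε i • e i‖ ≤ Cql * ‖(∑ i ∈ A, ε i • e i) + x‖) :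
    ∀ (A : Finset ℕ) (ε : ℕ → ℝ) (x : X),
      (∀ i ∈ A, |ε i| = 1) →
      (∀ i ∈ A, f i x = 0) → (∀ i, |f i x| ≤ 1) →
      ‖∑ i ∈ A, ε i • e i‖ ≤
        max (α₁ * α₂ * (nseq 0 : ℝ)) (Cql * (K + (l : ℝ) - 1)) *
          ‖(∑ i ∈ A, ε i • e i) + x‖ := by
  intro A ε x hε hx hx1
  classical
  set y := (∑ i ∈ A, ε i • e i) + x with hy
  set M := max (α₁ * α₂ * (nseq 0 : ℝ)) (Cql * (K + (l : ℝ) - 1)) with hM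
  have hMc : Cql * (K + (l : ℝ) - 1) ≤ M := le_max_right _ _
  have hMa : α₁ * α₂ * (nseq 0 : ℝ) ≤ M := le_max_left _ _
  have hflc : ∀ (T : Finset ℕ) (i : ℕ),
      f i (∑ j ∈ T, ε j • e j) = if i ∈ T then ε i else 0 := by
    intro T i
    rw [map_sum]
    have h1 : ∀ j ∈ T, f i (ε j • e j) = if i = j then ε j else 0 := by
      intro j _
      rw [map_smul, hbi]
      simp only [smul_eq_mul]
      split_ifs <;> ring
    rw [Finset.sum_congr rfl h1, Finset.sum_ite_eq]
  -- helper: any subset of A of admissible cardinality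
  have hhelp : ∀ S : Finset ℕ, S ⊆ A → (∃ k, S.card = nseq k) →
      ‖∑ i ∈ S, ε i • e i‖ ≤ Cql * ‖y‖ := by
    intro S hSA hScard
    set z := (∑ i ∈ A \ S, ε i • e i) + x with hz
    have h2 : ∀ i ∈ S, f i z = 0 := by
      intro i hi
      rw [hz, map_add, hflc, hx i (hSA hi)]
      simp [Finset.mem_sdiff, hi]
    have h3 : ∀ i, |f i z| ≤ 1 := by
      intro i
      rw [hz, map_add, hflc]
      by_cases hi : i ∈ A \ S
      · rw [if_pos hi, hx i (Finset.mem_sdiff.mp hi).1, add_zero]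
        exact le_of_eq (hε i (Finset.mem_sdiff.mp hi).1)
      · rw [if_neg hi, zero_add]
        exact hx1 i
    have h4 := hqglc S ε z hScard (fun i hi => hε i (hSA hi)) h2 h3
    have h5 : (∑ i ∈ S, ε i • e i) + z = y := by
      rw [hz, hy, ← add_assoc, add_comm (∑ i ∈ S, ε i • e i), Finset.sum_sdiff hSA]
    rwa [h5] at h4
  by_cases hcase : A.card ≤ nseq 0
  · -- small case
    rcases A.eq_empty_or_nonempty with rfl | ⟨i0, hi0⟩
    · rw [Finset.sum_empty, norm_zero]
      have hM0 : (0:ℝ) ≤ M := le_trans (by positivity) hMa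
      exact mul_nonneg hM0 (norm_nonneg _)
    · have h1 : (1:ℝ) ≤ α₂ * ‖y‖ := by
        have hf : f i0 y = ε i0 := by
          rw [hy, map_add, hflc, if_pos hi0, hx i0 hi0, add_zero]
        have hb : ‖f i0 y‖ ≤ ‖f i0‖ * ‖y‖ := (f i0).le_opNorm y
        rw [hf, Real.norm_eq_abs, hε i0 hi0] at hb
        calc (1:ℝ) ≤ ‖f i0‖ * ‖y‖ := hb
          _ ≤ α₂ * ‖y‖ := mul_le_mul_of_nonneg_right (hα₂ i0) (norm_nonneg _)
      have h2 : ‖∑ i ∈ A, ε i • e i‖ ≤ α₁ * A.card := by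
        calc ‖∑ i ∈ A, ε i • e i‖ ≤ ∑ i ∈ A, ‖ε i • e i‖ := norm_sum_le _ _
          _ ≤ ∑ _i ∈ A, α₁ := by
              apply Finset.sum_le_sum
              intro i hi
              rw [norm_smul, Real.norm_eq_abs, hε i hi, one_mul]
              exact hα₁ i
          _ = α₁ * A.card := by rw [Finset.sum_const, nsmul_eq_mul, mul_comm]
      have hcard : (A.card : ℝ) ≤ (nseq 0 : ℝ) := by exact_mod_cast hcase
      calc ‖∑ i ∈ A, ε i • e i‖ ≤ α₁ * A.card := h2
        _ ≤ α₁ * (nseq 0 : ℝ) := mul_le_mul_of_nonneg_left hcard hα₁pos.le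
        _ = α₁ * (nseq 0 : ℝ) * 1 := by ring
        _ ≤ α₁ * (nseq 0 : ℝ) * (α₂ * ‖y‖) := by
            apply mul_le_mul_of_nonneg_left h1
            positivity
        _ = α₁ * α₂ * (nseq 0 : ℝ) * ‖y‖ := by ring
        _ ≤ M * ‖y‖ := mul_le_mul_of_nonneg_right hMa (norm_nonneg _)
  · push_neg at hcase
    set m := A.card with hm
    have hnn : ∀ n : ℕ, n ≤ nseq n := fun n => hmono.le_apply
    have hex : ∃ j, m < nseq j := ⟨m + 1, lt_of_lt_of_le (Nat.lt_succ_self m) (hnn (m+1))⟩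
    obtain ⟨k, hk1, hk2⟩ : ∃ k, nseq k ≤ m ∧ m < nseq (k+1) := by
      have h0 : ¬ m < nseq 0 := not_lt.mpr hcase.le
      set k0 := Nat.find hex with hk0def
      have hk0 : m < nseq k0 := Nat.find_spec hex
      have hk0pos : k0 ≠ 0 := by
        intro hc
        rw [hc] at hk0
        exact h0 hk0
      refine ⟨k0 - 1, ?_, ?_⟩
      · have hmin := Nat.find_min hex (show k0 - 1 < k0 by omega)
        omega
      · have : k0 - 1 + 1 = k0 := by omega
        rw [this]
        exact hk0
    set ν := nseq k with hν
    have hν0 : 0 < ν := lt_of_lt_of_le hn1 (hmono.monotone (Nat.zero_le k))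
    set t := m / ν with ht
    set r := m % ν with hr
    have hdm : ν * t + r = m := Nat.div_add_mod m ν
    have hrν : r < ν := Nat.mod_lt _ hν0
    have htl : t < l := by
      rw [ht, Nat.div_lt_iff_lt_mul hν0]
      calc m < nseq (k+1) := hk2
        _ ≤ l * ν := hgaps k
        _ = l * ν := rfl
      -- need m < l * ν vs  _ < l * ν ; div_lt_iff gives m < l * ν
    have key : ∀ s : ℕ, s ≤ t →
        ‖∑ i ∈ A.filter (· < thr A (r + s * ν)), ε i • e i‖ ≤ (K + (s:ℝ)) * (Cql * ‖y‖) := by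
      intro s
      induction s with
      | zero =>
        intro _
        simp only [Nat.zero_mul, Nat.add_zero, Nat.cast_zero]
        set A₁ := A.filter (· < thr A ν) with hA₁
        have hA₁card : A₁.card = ν := by
          rw [hA₁, thr_card]
          omega
        have hA₁S : ‖∑ i ∈ A₁, ε i • e i‖ ≤ Cql * ‖y‖ :=
          hhelp A₁ (filter_subset _ _) ⟨k, hA₁card⟩
        have hproj : ∑ i ∈ Finset.range (thr A r), f i (∑ j ∈ A₁, ε j • e j) • e i
            = ∑ i ∈ A.filter (· < thr A r), ε i • e i := by
          have h1 : ∀ i ∈ Finset.range (thr A r),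
              f i (∑ j ∈ A₁, ε j • e j) • e i = if i ∈ A₁ then ε i • e i else 0 := by
            intro i _
            rw [hflc]
            split_ifs with h
            · rfl
            · rw [zero_smul]
          rw [Finset.sum_congr rfl h1, ← Finset.sum_filter]
          congr 1
          ext i
          simp only [mem_filter, mem_range, hA₁]
          constructor
          · rintro ⟨hiq, hiA, _⟩
            exact ⟨hiA, hiq⟩
          · rintro ⟨hiA, hiq⟩
            exact ⟨hiq, hiA, lt_of_lt_of_le hiq (thr_mono A (le_of_lt hrν))⟩
        calc ‖∑ i ∈ A.filter (· < thr A r), ε i • e i‖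
            = ‖∑ i ∈ Finset.range (thr A r), f i (∑ j ∈ A₁, ε j • e j) • e i‖ := by rw [hproj]
          _ ≤ K * ‖∑ j ∈ A₁, ε j • e j‖ := hSch _ _
          _ ≤ K * (Cql * ‖y‖) := mul_le_mul_of_nonneg_left hA₁S hKpos.le
          _ = (K + 0) * (Cql * ‖y‖) := by ring
      | succ s ih =>
        intro hst
        have ihs := ih (le_trans (Nat.le_succ s) hst)
        set a := r + s * ν with ha
        set b := r + (s+1) * ν with hb
        have hbm : b ≤ m := by
          have h1 : (s+1) * ν ≤ t * ν := Nat.mul_le_mul_right ν hst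
          have h3 : t * ν = ν * t := Nat.mul_comm t ν
          omega
        have hab : a ≤ b := by
          have h1 : s * ν ≤ (s+1) * ν := Nat.mul_le_mul_right ν (Nat.le_succ s)
          omega
        set E := A.filter (· < thr A a) with hE
        set F := A.filter (· < thr A b) with hF
        have hEF : E ⊆ F := by
          rw [hE, hF]
          intro i hi
          rw [mem_filter] at hi ⊢
          exact ⟨hi.1, lt_of_lt_of_le hi.2 (thr_mono A hab)⟩
        have hFc : F.card = b := by
          rw [hF, thr_card]
          omega
        have hEc : E.card = a := by
          rw [hE, thr_card]
          omega
        have hBc : (F \ E).card = ν := by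
          rw [card_sdiff_of_subset hEF, hFc, hEc]
          have : (s+1) * ν = s * ν + ν := Nat.succ_mul s ν
          omega
        have hBA : F \ E ⊆ A := (sdiff_subset).trans (filter_subset _ _)
        have hB : ‖∑ i ∈ F \ E, ε i • e i‖ ≤ Cql * ‖y‖ := hhelp _ hBA ⟨k, hBc⟩
        calc ‖∑ i ∈ F, ε i • e i‖
            = ‖(∑ i ∈ F \ E, ε i • e i) + ∑ i ∈ E, ε i • e i‖ := by
              rw [Finset.sum_sdiff hEF]
          _ ≤ ‖∑ i ∈ F \ E, ε i • e i‖ + ‖∑ i ∈ E, ε i • e i‖ := norm_add_le _ _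
          _ ≤ Cql * ‖y‖ + (K + (s:ℝ)) * (Cql * ‖y‖) := add_le_add hB ihs
          _ = (K + ((s:ℕ)+1 : ℕ)) * (Cql * ‖y‖) := by push_cast; ring
    have hfin := key t le_rfl
    have hAt : A.filter (· < thr A (r + t * ν)) = A := by
      apply Finset.eq_of_subset_of_card_le (filter_subset _ _)
      rw [thr_card]
      have h3 : t * ν = ν * t := Nat.mul_comm t ν
      omega
    rw [hAt] at hfin
    have htr : (t:ℝ) ≤ (l:ℝ) - 1 := by
      have h1 : t + 1 ≤ l := htl
      have h2 : ((t:ℝ) + 1) ≤ (l:ℝ) := by exact_mod_cast h1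
      linarith
    calc ‖∑ i ∈ A, ε i • e i‖ ≤ (K + (t:ℝ)) * (Cql * ‖y‖) := hfin
      _ ≤ (K + ((l:ℝ) - 1)) * (Cql * ‖y‖) := by
          apply mul_le_mul_of_nonneg_right _ (by positivity)
          linarith
      _ = Cql * (K + (l:ℝ) - 1) * ‖y‖ := by ring
      _ ≤ M * ‖y‖ := mul_le_mul_of_nonneg_right hMc (norm_nonneg _)
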